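/- Let C : ℝ → ℝ be strictly convex and monotone increasing, and let μ₁, μ₂ ∈ ℝ with μ₁ ≠ μ₂. Then the function (x₁, x₂) ↦ C(x₁ + x₂) - μ₁ x₁ - μ₂ x₂ has a unique minimizer over the compact box [-P₁, P₁] × [-P₂, P₂] (for any P₁, P₂ > 0). -/

import Mathlib

open Set

/-- If `C` is strictly convex and monotone increasing and `μ₁ ≠ μ₂`, then the function
`(x₁, x₂) ↦ C (x₁ + x₂) - μ₁ x₁ - μ₂ x₂` has a unique minimizer over the box
`[-P₁, P₁] × [-P₂, P₂]`. -/
theorem stmt_0 (C : ℝ → ℝ) (hC : StrictConvexOn ℝ Set.univ C) (hmono : Monotone C)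
    (P₁ P₂ μ₁ μ₂ : ℝ) (hP₁ : 0 < P₁) (hP₂ : 0 < P₂) (hμ : μ₁ ≠ μ₂) :
    ∃! z : ℝ × ℝ, z ∈ (Set.Icc (-P₁) P₁ ×ˢ Set.Icc (-P₂) P₂) ∧
      ∀ y ∈ (Set.Icc (-P₁) P₁ ×ˢ Set.Icc (-P₂) P₂),
        C (z.1 + z.2) - μ₁ * z.1 - μ₂ * z.2 ≤ C (y.1 + y.2) - μ₁ * y.1 - μ₂ * y.2 := by
  set S := (Set.Icc (-P₁) P₁ ×ˢ Set.Icc (-P₂) P₂) with hSdef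
  have hSne : S.Nonempty := ⟨(0, 0), by
    constructor <;> constructor <;> simp <;> linarith⟩
  have hScomp : IsCompact S := isCompact_Icc.prod isCompact_Icc
  have hCcont : Continuous C := by
    exact continuousOn_univ.mp (hC.convexOn.continuousOn isOpen_univ)
  have hfcont : Continuous fun z : ℝ × ℝ => C (z.1 + z.2) - μ₁ * z.1 - μ₂ * z.2 := by
    fun_prop
  obtain ⟨z, hzS, hzmin⟩ := hScomp.exists_isMinOn hSne hfcont.continuousOn
  rw [isMinOn_iff] at hzmin
  refine ⟨z, ⟨hzS, fun y hy => hzmin y hy⟩, ?_⟩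
  rintro y ⟨hyS, hymin⟩
  have h1 : C (y.1 + y.2) - μ₁ * y.1 - μ₂ * y.2 ≤ C (z.1 + z.2) - μ₁ * z.1 - μ₂ * z.2 :=
    hymin z hzS
  have h2 : C (z.1 + z.2) - μ₁ * z.1 - μ₂ * z.2 ≤ C (y.1 + y.2) - μ₁ * y.1 - μ₂ * y.2 :=
    hzmin y hyS
  by_cases hsum : y.1 + y.2 = z.1 + z.2
  · -- same sum: linear part forces equality
    have heq : C (y.1 + y.2) = C (z.1 + z.2) := by rw [hsum]
    have h3 : μ₁ * y.1 + μ₂ * y.2 = μ₁ * z.1 + μ₂ * z.2 := by linarith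
    have h4 : (μ₁ - μ₂) * (y.1 - z.1) = 0 := by linear_combination h3 - μ₂ * hsum
    have h5 : y.1 = z.1 := by
      rcases mul_eq_zero.mp h4 with h | h
      · exact absurd (by linarith : μ₁ = μ₂) hμ
      · linarith
    have h6 : y.2 = z.2 := by linarith
    exact Prod.ext h5 h6
  · -- different sums: midpoint is strictly better, contradiction
    exfalso
    set m : ℝ × ℝ := ((y.1 + z.1) / 2, (y.2 + z.2) / 2) with hm
    have hmS : m ∈ S := by
      obtain ⟨⟨ha1, ha2⟩, ⟨ha3, ha4⟩⟩ := hyS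
      obtain ⟨⟨hb1, hb2⟩, ⟨hb3, hb4⟩⟩ := hzS
      exact ⟨⟨by simp [hm]; linarith, by simp [hm]; linarith⟩,
        ⟨by simp [hm]; linarith, by simp [hm]; linarith⟩⟩
    have hstrict := hC.2 (Set.mem_univ (y.1 + y.2)) (Set.mem_univ (z.1 + z.2)) hsum
      (by norm_num : (0:ℝ) < 1/2) (by norm_num : (0:ℝ) < 1/2) (by norm_num)
    simp only [smul_eq_mul] at hstrict
    have hmsum : m.1 + m.2 = 1/2 * (y.1 + y.2) + 1/2 * (z.1 + z.2) := by
      simp [hm]; ring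
    have hzm := hzmin m hmS
    rw [hmsum] at hzm
    have : C (z.1 + z.2) ≤ 1/2 * C (y.1 + y.2) + 1/2 * C (z.1 + z.2) -
        (μ₁ * (y.1 - z.1) + μ₂ * (y.2 - z.2)) / 2 := by
      simp only [hm] at hzm
      linarith
    simp only [hm] at hzm
    linarith
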